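/- Let K be a field and E an evolution K-algebra (a K-vector space with bilinear product admitting a basis {e_i} with e_i e_j = 0 for i ≠ j) which is NOT associative. Let λ₀,λ₁,λ₂,λ₃ ∈ K, let B be a commutative associative (not necessarily unital) K-algebra with a K-linear involution *, and let σ : E → B be an injective K-linear map with σ(xy) = p(σ(x),σ(y)) for all x,y ∈ E, where p(u,v) = λ₀uv + λ₁uv* + λ₂u*v + λ₃u*v*. Then: (1) there exists x ∈ E with σ(x)* ≠ σ(x), i.e. σ(E) is not contained in the symmetric elements of (B,*); and (2) the map τ : E → B defined by τ(x) := σ(x)* also satisfies τ(xy) = p(τ(x),τ(y)) for all x,y ∈ E (so τ is a faithful representation relative to the same p), and τ ≠ σ. -/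

import Mathlib

/-- Let `E` be a non-associative evolution `K`-algebra and
`σ : E → B` a faithful associative and commutative representation relative to
`p(u,v) = λ₀uv + λ₁uv* + λ₂u*v + λ₃u*v*`.  Then (1) `σ(E)` is not contained in the
symmetric elements of `(B,*)`, and (2) `τ := * ∘ σ` is also a representation relative
to the same `p`, and `τ ≠ σ`. -/
theorem stmt17 (K : Type) [Field K] (E : Type) [NonUnitalNonAssocRing E]
    [Module K E] [SMulCommClass K E E] [IsScalarTower K E E]
    (hbasis : ∃ (ι : Type) (b : Module.Basis ι K E), ∀ i j : ι, i ≠ j → b i * b j = 0)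
    (hna : ¬ ∀ x y z : E, x * y * z = x * (y * z))
    (l0 l1 l2 l3 : K)
    (B : Type) [NonUnitalCommRing B] [Module K B]
    [SMulCommClass K B B] [IsScalarTower K B B]
    (s : B →ₗ[K] B)
    (hsmul : ∀ x y : B, s (x * y) = s x * s y)
    (hsinv : ∀ x : B, s (s x) = x)
    (σ : E →ₗ[K] B) (hinj : Function.Injective σ)
    (hrep : ∀ x y : E, σ (x * y) =
      l0 • (σ x * σ y) + l1 • (σ x * s (σ y)) + l2 • (s (σ x) * σ y) +
        l3 • (s (σ x) * s (σ y))) :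
    (∃ x : E, s (σ x) ≠ σ x) ∧
    (∀ x y : E, s (σ (x * y)) =
      l0 • (s (σ x) * s (σ y)) + l1 • (s (σ x) * s (s (σ y))) +
        l2 • (s (s (σ x)) * s (σ y)) + l3 • (s (s (σ x)) * s (s (σ y)))) ∧
    (fun x : E => s (σ x)) ≠ (fun x : E => σ x) := by
  have key : (∃ x : E, s (σ x) ≠ σ x) := by
    by_contra h
    push_neg at h
    apply hna
    intro x y z
    have hr : ∀ a b : E, σ (a * b) = (l0 + l1 + l2 + l3) • (σ a * σ b) := by
      intro a b
      rw [hrep, h, h, add_smul, add_smul, add_smul]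
    apply hinj
    simp only [hr, smul_mul_assoc, mul_smul_comm, mul_assoc]
  refine ⟨key, ?_, ?_⟩
  · intro x y
    rw [hrep]
    simp only [map_add, map_smul, hsmul]
  · intro heq
    obtain ⟨x, hx⟩ := key
    exact hx (congrFun heq x)
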